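/- Let n > 1, let α ∈ F_{2^n} satisfy tr(α + 1) = 0, let d = gcd(n, 2i), and let h_α(x) = x + tr(αx + x^{2^i+1}) on F_{2^n}. Then: (i) for every c ∈ F_{2^d} \ F_2, the c-differential uniformity of h_α equals 1 (h_α is PcN); (ii) for every c ∈ F_{2^n} \ F_{2^d}, the c-differential uniformity of h_α equals 2 (h_α is APcN). -/
import Mathlib


/-- The absolute trace from `F_{2^n}` to its prime field, computed inside the field. -/
noncomputable def aTr {K : Type} [CommRing K] (n : ℕ) (x : K) : K :=
  ∑ k ∈ Finset.range n, x ^ 2 ^ k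

/-- The `c`-differential uniformity of `F`. -/
noncomputable def cDelta {K : Type} [Field K] (c : K) (F : K → K) : ℕ :=
  sSup { k : ℕ | ∃ a b : K, (c = 1 → a ≠ 0) ∧
    k = Nat.card {x : K // F (x + a) + c * F x = b} }

/-- The function `h_α(x) = x + tr(αx + x^{2^i+1})` on `F_{2^n}`. -/
noncomputable def hAlpha (n i : ℕ) (α : GaloisField 2 n) (x : GaloisField 2 n) :
    GaloisField 2 n :=
  x + aTr n (α * x + x ^ (2 ^ i + 1))

set_option linter.unusedSectionVars false
set_option linter.unusedVariables false
set_option maxHeartbeats 1000000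

section Aux
variable {K : Type} [Field K] [CharP K 2]

lemma aTr_add (n : ℕ) (x y : K) : aTr n (x + y) = aTr n x + aTr n y := by
  unfold aTr
  rw [← Finset.sum_add_distrib]
  exact Finset.sum_congr rfl fun k _ => add_pow_char_pow ..

lemma aTr_zero (n : ℕ) : aTr n (0 : K) = 0 := by
  unfold aTr
  exact Finset.sum_eq_zero fun k _ => zero_pow (by positivity)

-- iterate lemma
lemma pow_pow_mul {x : K} {m : ℕ} (hx : x ^ 2 ^ m = x) (k : ℕ) : x ^ 2 ^ (k * m) = x := by
  induction k with
  | zero => simp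
  | succ k ih =>
      have h2 : 2 ^ ((k + 1) * m) = 2 ^ (k * m) * 2 ^ m := by
        rw [← pow_add]; ring_nf
      rw [h2, pow_mul, ih, hx]

lemma pow_pow_gcd {x : K} {a b : ℕ} (ha : 0 < a) (hb : 0 < b)
    (hxa : x ^ 2 ^ a = x) (hxb : x ^ 2 ^ b = x) : x ^ 2 ^ Nat.gcd a b = x := by
  set g := Nat.gcd a b with hg
  obtain ⟨u, v, huv⟩ : ∃ u v : ℕ, u * a = g + v * b := by
    have hz := Nat.gcd_eq_gcd_ab a b
    set s := Nat.gcdA a b with hs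
    set t := Nat.gcdB a b with ht
    set N : ℕ := s.natAbs + t.natAbs + 1 with hN
    have hsN : 0 ≤ s + (b : ℤ) * N := by
      have h1 : -(s.natAbs : ℤ) ≤ s := by omega
      have h2 : (N : ℤ) ≤ (b : ℤ) * N := by
        refine le_mul_of_one_le_left (by positivity) ?_
        exact_mod_cast hb
      have h3 : (s.natAbs : ℤ) < (N : ℤ) := by exact_mod_cast by omega
      linarith
    have htN : 0 ≤ (a : ℤ) * N - t := by
      have h1 : t ≤ (t.natAbs : ℤ) := by omega
      have h2 : (N : ℤ) ≤ (a : ℤ) * N := by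
        refine le_mul_of_one_le_left (by positivity) ?_
        exact_mod_cast ha
      have h3 : (t.natAbs : ℤ) < (N : ℤ) := by exact_mod_cast by omega
      linarith
    refine ⟨(s + (b : ℤ) * N).toNat, ((a : ℤ) * N - t).toNat, ?_⟩
    have : (((s + (b : ℤ) * N).toNat : ℤ)) * a = (g : ℤ) + (((a : ℤ) * N - t).toNat) * b := by
      rw [Int.toNat_of_nonneg hsN, Int.toNat_of_nonneg htN]
      linear_combination -hz
    exact_mod_cast this
  have h1 : x ^ 2 ^ (u * a) = x := pow_pow_mul hxa u
  have h2 : x ^ 2 ^ (v * b) = x := pow_pow_mul hxb v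
  have h3 : x ^ 2 ^ (u * a) = (x ^ 2 ^ (v * b)) ^ 2 ^ g := by
    rw [← pow_mul, ← pow_add, huv, add_comm]
  rw [h2] at h3
  rw [h1] at h3
  exact h3.symm

end Aux

section Tr
variable {K : Type} [Field K] [CharP K 2]

-- trace is invariant under squaring, assuming x^(2^n) = x for all x
lemma aTr_sq {n : ℕ} (hcard : ∀ x : K, x ^ 2 ^ n = x) (x : K) :
    aTr n (x ^ 2) = aTr n x := by
  unfold aTr
  have h1 : ∀ k : ℕ, (x ^ 2) ^ 2 ^ k = x ^ 2 ^ (k + 1) := by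
    intro k
    rw [← pow_mul, pow_succ]
    ring_nf
  calc ∑ k ∈ Finset.range n, (x ^ 2) ^ 2 ^ k
      = ∑ k ∈ Finset.range n, x ^ 2 ^ (k + 1) := Finset.sum_congr rfl fun k _ => h1 k
    _ = ∑ k ∈ Finset.range n, x ^ 2 ^ k := by
        have h2 := Finset.sum_range_succ' (fun k => x ^ 2 ^ k) n
        have h3 := Finset.sum_range_succ (fun k => x ^ 2 ^ k) n
        rw [h3] at h2
        simp only [pow_zero, pow_one, hcard] at h2
        exact (add_right_cancel h2.symm)

lemma aTr_frob {n : ℕ} (hcard : ∀ x : K, x ^ 2 ^ n = x) (j : ℕ) (x : K) :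
    aTr n (x ^ 2 ^ j) = aTr n x := by
  induction j with
  | zero => simp
  | succ j ih =>
      have : x ^ 2 ^ (j + 1) = (x ^ 2 ^ j) ^ 2 := by
        rw [← pow_mul, pow_succ]
      rw [this, aTr_sq hcard, ih]

lemma aTr_val {n : ℕ} (hcard : ∀ x : K, x ^ 2 ^ n = x) (x : K) :
    aTr n x = 0 ∨ aTr n x = 1 := by
  have h : (aTr n x) ^ 2 = aTr n x := by
    unfold aTr
    rw [sum_pow_char]
    have : ∀ k ∈ Finset.range n, (x ^ 2 ^ k) ^ 2 = (x ^ 2) ^ 2 ^ k := by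
      intro k _
      rw [← pow_mul, ← pow_mul, mul_comm]
    rw [Finset.sum_congr rfl this]
    exact aTr_sq hcard x
  have h2 : aTr n x * (aTr n x - 1) = 0 := by ring_nf; linear_combination h
  rcases mul_eq_zero.mp h2 with h3 | h3
  · exact Or.inl h3
  · exact Or.inr (by linear_combination h3)

end Tr

open Polynomial in
lemma exists_aTr_one {K : Type} [Field K] [CharP K 2] [Fintype K] {n : ℕ} (hn : 0 < n)
    (hcardK : Fintype.card K = 2 ^ n) : ∃ w : K, aTr n w = 1 := by
  by_contra hcon
  push_neg at hcon
  have hall : ∀ w : K, aTr n w = 0 := by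
    intro w
    have hcard : ∀ x : K, x ^ 2 ^ n = x := by
      intro x
      have := FiniteField.pow_card x
      rwa [hcardK] at this
    rcases aTr_val hcard w with h | h
    · exact h
    · exact absurd h (hcon w)
  set P : K[X] := ∑ k ∈ Finset.range n, X ^ 2 ^ k with hP
  have heval : ∀ x : K, P.eval x = aTr n x := by
    intro x
    rw [hP]
    simp [aTr, eval_finset_sum]
  have hdeg : P.natDegree ≤ 2 ^ (n - 1) := by
    refine natDegree_sum_le_of_forall_le _ _ ?_
    intro k hk
    rw [natDegree_X_pow]
    exact Nat.pow_le_pow_right (by norm_num) (by simp at hk; omega)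
  have hPzero : P = 0 := by
    refine eq_zero_of_natDegree_lt_card_of_eval_eq_zero P Function.injective_id
      (fun x => by rw [heval]; exact hall x) ?_
    rw [hcardK]
    calc P.natDegree ≤ 2 ^ (n - 1) := hdeg
      _ < 2 ^ n := Nat.pow_lt_pow_right (by norm_num) (by omega)
  have hcoeff : P.coeff (2 ^ (n - 1)) = 1 := by
    rw [hP, finset_sum_coeff]
    have : ∀ k ∈ Finset.range n, (X ^ 2 ^ k : K[X]).coeff (2 ^ (n - 1)) =
        if k = n - 1 then 1 else 0 := by
      intro k hk
      rw [coeff_X_pow]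
      congr 1
      simp only [eq_iff_iff]
      constructor
      · intro h; exact Nat.pow_right_injective (le_refl 2) h.symm
      · intro h; rw [h]
    rw [Finset.sum_congr rfl this, Finset.sum_ite_eq' (Finset.range n) (n - 1)]
    simp [Finset.mem_range]
    omega
  rw [hPzero] at hcoeff
  simp at hcoeff

section TF
variable {K : Type} [Field K] [CharP K 2]

/-- inner function -/
noncomputable def Tf (n i : ℕ) (α x : K) : K := aTr n (α * x + x ^ (2 ^ i + 1))

/-- the linearized coefficient -/
noncomputable def bf (n i : ℕ) (a : K) : K := a ^ 2 ^ i + a ^ 2 ^ ((n - 1) * i)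

variable {n i : ℕ}

lemma exp_split (hn : 1 < n) : i + (n - 1) * i = n * i := by
  have h0 : n - 1 + 1 = n := by omega
  calc i + (n - 1) * i = ((n - 1) + 1) * i := by ring
    _ = n * i := by rw [h0]

lemma pow_ni (hcard : ∀ x : K, x ^ 2 ^ n = x) (x : K) : x ^ 2 ^ (n * i) = x := by
  have := pow_pow_mul (hcard x) i
  rwa [mul_comm] at this

lemma frob_shift1 (hcard : ∀ x : K, x ^ 2 ^ n = x) (hn : 1 < n) (u v : K) :
    aTr n (u ^ 2 ^ i * v) = aTr n (u * v ^ 2 ^ ((n - 1) * i)) := by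
  have h := aTr_frob hcard ((n - 1) * i) (u ^ 2 ^ i * v)
  rw [mul_pow, ← pow_mul, ← pow_add, exp_split (i := i) hn, pow_ni hcard] at h
  exact h.symm

lemma frob_shift2 (hcard : ∀ x : K, x ^ 2 ^ n = x) (hn : 1 < n) (u v : K) :
    aTr n (u ^ 2 ^ ((n - 1) * i) * v) = aTr n (u * v ^ 2 ^ i) := by
  have h := aTr_frob hcard i (u ^ 2 ^ ((n - 1) * i) * v)
  rw [mul_pow, ← pow_mul, ← pow_add, add_comm ((n-1)*i) i, exp_split (i := i) hn,
    pow_ni hcard] at h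
  exact h.symm

lemma bf_symm (hcard : ∀ x : K, x ^ 2 ^ n = x) (hn : 1 < n) (a u : K) :
    aTr n (bf n i a * u) = aTr n (a * bf n i u) := by
  unfold bf
  rw [add_mul, aTr_add, frob_shift1 hcard hn, frob_shift2 hcard hn, mul_add, aTr_add]
  exact add_comm _ _

lemma bf_add (x y : K) : bf n i (x + y) = bf n i x + bf n i y := by
  unfold bf
  rw [add_pow_char_pow, add_pow_char_pow]
  ring

lemma bf_one : bf n i (1 : K) = 0 := by
  unfold bf
  rw [one_pow, one_pow, CharTwo.add_self_eq_zero]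

lemma Tf_expand (hcard : ∀ x : K, x ^ 2 ^ n = x) (hn : 1 < n) (α a x : K) :
    Tf n i α (x + a) = Tf n i α x + Tf n i α a + aTr n (bf n i a * x) := by
  have key : α * (x + a) + (x + a) ^ (2 ^ i + 1) =
      (α * x + x ^ (2 ^ i + 1)) + (α * a + a ^ (2 ^ i + 1))
        + (x ^ 2 ^ i * a + a ^ 2 ^ i * x) := by
    rw [pow_succ, pow_succ, pow_succ, add_pow_char_pow]
    ring
  unfold Tf
  rw [key, aTr_add, aTr_add, aTr_add]
  have hb : aTr n (bf n i a * x) = aTr n (x ^ 2 ^ i * a) + aTr n (a ^ 2 ^ i * x) := by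
    rw [bf, add_mul, aTr_add, frob_shift2 hcard hn a x, mul_comm a (x ^ 2 ^ i), add_comm]
  rw [hb, aTr_add n (x ^ 2 ^ i * a) (a ^ 2 ^ i * x)]

lemma Tf_zero (α : K) : Tf n i α 0 = 0 := by
  unfold Tf
  rw [mul_zero, zero_pow (by positivity), add_zero, aTr_zero]

lemma Tf_one (α : K) : Tf n i α 1 = aTr n (α + 1) := by
  unfold Tf
  rw [mul_one, one_pow]

lemma Tf_add_one (hcard : ∀ x : K, x ^ 2 ^ n = x) (hn : 1 < n) (α : K)
    (hα : aTr n (α + 1) = 0) (x : K) :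
    Tf n i α (x + 1) = Tf n i α x := by
  rw [Tf_expand hcard hn, Tf_one, hα, bf_one, zero_mul, aTr_zero, add_zero, add_zero]

end TF

section Cards
variable {K : Type} [Field K] [Finite K]

lemma card_fiber_eq_one {g : K → K} (hinj : Function.Injective g) (b : K) :
    Nat.card {x : K // g x = b} = 1 := by
  have hbij := Finite.injective_iff_bijective.mp hinj
  obtain ⟨x0, hx0, hxu⟩ := hbij.existsUnique b
  rw [Nat.card_eq_one_iff_unique]
  refine ⟨⟨fun u v => Subtype.ext ((hxu u.1 u.2).trans (hxu v.1 v.2).symm)⟩, ⟨⟨x0, hx0⟩⟩⟩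

lemma card_fiber_le_two {P : K → Prop}
    (hP : ∀ x y z : K, P x → P y → P z → x = y ∨ x = z ∨ y = z) :
    Nat.card {x : K // P x} ≤ 2 := by
  classical
  by_contra hgt
  push_neg at hgt
  haveI : Fintype {x : K // P x} := Fintype.ofFinite _
  rw [Nat.card_eq_fintype_card, ← Finset.card_univ] at hgt
  obtain ⟨u, v, w, _, _, _, huv, huw, hvw⟩ := Finset.two_lt_card_iff.mp hgt
  rcases hP u.1 v.1 w.1 u.2 v.2 w.2 with h | h | h
  · exact huv (Subtype.ext h)
  · exact huw (Subtype.ext h)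
  · exact hvw (Subtype.ext h)

lemma card_fiber_ge_two {P : K → Prop} {x y : K} (hx : P x) (hy : P y) (hxy : x ≠ y) :
    2 ≤ Nat.card {x : K // P x} := by
  classical
  haveI : Fintype {x : K // P x} := Fintype.ofFinite _
  have hnt : Nontrivial {x : K // P x} :=
    ⟨⟨⟨x, hx⟩, ⟨y, hy⟩, fun h => hxy (congrArg Subtype.val h)⟩⟩
  rw [Nat.card_eq_fintype_card]
  exact Fintype.one_lt_card_iff_nontrivial.mpr hnt

end Cards
section MainProof

variable {n i : ℕ}

lemma Dsum (hcard : ∀ x : GaloisField 2 n, x ^ 2 ^ n = x) (hn : 1 < n)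
    (α c a x y : GaloisField 2 n) :
    (hAlpha n i α (x + a) + c * hAlpha n i α x)
      + (hAlpha n i α (y + a) + c * hAlpha n i α y)
      = (1 + c) * (x + y) + (1 + c) * (Tf n i α x + Tf n i α y)
        + aTr n (bf n i a * (x + y)) := by
  have hF : ∀ z : GaloisField 2 n, hAlpha n i α z = z + Tf n i α z := fun z => rfl
  simp only [hF]
  rw [Tf_expand hcard hn α a x, Tf_expand hcard hn α a y]
  have h1 : aTr n (bf n i a * (x + y))
      = aTr n (bf n i a * x) + aTr n (bf n i a * y) := by
    rw [mul_add, aTr_add]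
  calc (x + a + (Tf n i α x + Tf n i α a + aTr n (bf n i a * x))
          + c * (x + Tf n i α x))
        + (y + a + (Tf n i α y + Tf n i α a + aTr n (bf n i a * y))
          + c * (y + Tf n i α y))
      = ((1 + c) * (x + y) + (1 + c) * (Tf n i α x + Tf n i α y)
          + (aTr n (bf n i a * x) + aTr n (bf n i a * y)))
        + (a + a) + (Tf n i α a + Tf n i α a) := by ring
    _ = (1 + c) * (x + y) + (1 + c) * (Tf n i α x + Tf n i α y)
          + aTr n (bf n i a * (x + y)) := by
        rw [CharTwo.add_self_eq_zero a, CharTwo.add_self_eq_zero (Tf n i α a),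
          add_zero, add_zero, h1]

-- collision classification
lemma classify (hcard : ∀ x : GaloisField 2 n, x ^ 2 ^ n = x) (hn : 1 < n)
    (α : GaloisField 2 n) (hα : aTr n (α + 1) = 0)
    (c : GaloisField 2 n) (hc1 : c ≠ 1) (a x y : GaloisField 2 n)
    (hD : hAlpha n i α (x + a) + c * hAlpha n i α x
        = hAlpha n i α (y + a) + c * hAlpha n i α y) :
    x = y ∨ ((x + y = (1 + c)⁻¹ ∨ x + y = 1 + (1 + c)⁻¹)
      ∧ aTr n (a * bf n i ((1 + c)⁻¹)) = 1) := by
  have h2eq : ∀ u v : GaloisField 2 n, u + v = 0 ↔ u = v := fun u v =>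
    ⟨fun h => by rwa [CharTwo.add_eq_iff_eq_add, zero_add] at h,
     fun h => by rw [h, CharTwo.add_self_eq_zero]⟩
  have he : (1 : GaloisField 2 n) + c ≠ 0 := fun h => hc1 ((h2eq 1 c).mp h).symm
  have hF : ∀ z : GaloisField 2 n, hAlpha n i α z = z + Tf n i α z := fun z => rfl
  have hsum0 : (hAlpha n i α (x + a) + c * hAlpha n i α x)
      + (hAlpha n i α (y + a) + c * hAlpha n i α y) = 0 := by
    rw [hD]; exact CharTwo.add_self_eq_zero _
  have hDsum := Dsum (i := i) hcard hn α c a x y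
  rw [hDsum] at hsum0
  have hTx : Tf n i α x = 0 ∨ Tf n i α x = 1 := aTr_val hcard _
  have hTy : Tf n i α y = 0 ∨ Tf n i α y = 1 := aTr_val hcard _
  have hl : aTr n (bf n i a * (x + y)) = 0 ∨ aTr n (bf n i a * (x + y)) = 1 :=
    aTr_val hcard _
  -- helper for the u = 1 contradiction
  have hu1 : x + y = 1 → Tf n i α y = Tf n i α x := by
    intro hu
    have hy' : x + 1 = y := by
      have h3 : x + (x + y) = y := by rw [← add_assoc, CharTwo.add_self_eq_zero, zero_add]
      rwa [hu] at h3
    rw [← hy', Tf_add_one hcard hn α hα]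
  rcases hTx with hTx | hTx <;> rcases hTy with hTy | hTy
  · -- t = 0
    rcases hl with hl | hl
    · left
      rw [hTx, hTy, hl] at hsum0
      simp only [add_zero, mul_zero] at hsum0
      rcases mul_eq_zero.mp hsum0 with h | h
      · exact absurd h he
      · exact (h2eq x y).mp h
    · right
      rw [hTx, hTy, hl] at hsum0
      simp only [add_zero, mul_zero, zero_add] at hsum0
      have h5 : (1 + c) * (x + y) = 1 := (h2eq _ _).mp hsum0
      have h6 : x + y = (1 + c)⁻¹ := eq_inv_of_mul_eq_one_right h5
      refine ⟨Or.inl h6, ?_⟩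
      rw [← bf_symm hcard hn, ← h6, hl]
  · -- Tx = 0, Ty = 1
    rcases hl with hl | hl
    · exfalso
      rw [hTx, hTy, hl] at hsum0
      simp only [zero_add, mul_one, add_zero] at hsum0
      have h5 : (1 + c) * (x + y) = (1 + c) * 1 := by
        rw [mul_one]; exact (h2eq _ _).mp hsum0
      have h6 : x + y = 1 := mul_left_cancel₀ he h5
      have := hu1 h6
      rw [hTx, hTy] at this
      exact one_ne_zero this
    · right
      rw [hTx, hTy, hl] at hsum0
      simp only [zero_add, mul_one] at hsum0
      have h5 : (1 + c) * (x + y) + (1 + c) = 1 := (h2eq _ _).mp hsum0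
      have h6 : (1 + c) * (x + y + 1) = 1 := by rw [mul_add, mul_one]; exact h5
      have h7 : x + y + 1 = (1 + c)⁻¹ := eq_inv_of_mul_eq_one_right h6
      have h8 : x + y = 1 + (1 + c)⁻¹ := by
        have h9 : x + y = (x + y + 1) + 1 := by
          rw [add_assoc, CharTwo.add_self_eq_zero, add_zero]
        rw [h9, h7, add_comm]
      refine ⟨Or.inr h8, ?_⟩
      have h10 : bf n i (x + y) = bf n i ((1 + c)⁻¹) := by
        rw [h8, bf_add, bf_one, zero_add]
      rw [← h10, ← bf_symm hcard hn, hl]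
  · -- Tx = 1, Ty = 0 (symmetric)
    rcases hl with hl | hl
    · exfalso
      rw [hTx, hTy, hl] at hsum0
      simp only [add_zero, mul_one] at hsum0
      have h5 : (1 + c) * (x + y) = (1 + c) * 1 := by
        rw [mul_one]; exact (h2eq _ _).mp hsum0
      have h6 : x + y = 1 := mul_left_cancel₀ he h5
      have := hu1 h6
      rw [hTx, hTy] at this
      exact one_ne_zero this.symm
    · right
      rw [hTx, hTy, hl] at hsum0
      simp only [add_zero, mul_one] at hsum0
      have h5 : (1 + c) * (x + y) + (1 + c) = 1 := (h2eq _ _).mp hsum0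
      have h6 : (1 + c) * (x + y + 1) = 1 := by rw [mul_add, mul_one]; exact h5
      have h7 : x + y + 1 = (1 + c)⁻¹ := eq_inv_of_mul_eq_one_right h6
      have h8 : x + y = 1 + (1 + c)⁻¹ := by
        have h9 : x + y = (x + y + 1) + 1 := by
          rw [add_assoc, CharTwo.add_self_eq_zero, add_zero]
        rw [h9, h7, add_comm]
      refine ⟨Or.inr h8, ?_⟩
      have h10 : bf n i (x + y) = bf n i ((1 + c)⁻¹) := by
        rw [h8, bf_add, bf_one, zero_add]
      rw [← h10, ← bf_symm hcard hn, hl]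
  · -- t = 0 with both = 1
    rcases hl with hl | hl
    · left
      rw [hTx, hTy, hl] at hsum0
      rw [CharTwo.add_self_eq_zero (1 : GaloisField 2 n)] at hsum0
      simp only [add_zero, mul_zero] at hsum0
      rcases mul_eq_zero.mp hsum0 with h | h
      · exact absurd h he
      · exact (h2eq x y).mp h
    · right
      rw [hTx, hTy, hl] at hsum0
      rw [CharTwo.add_self_eq_zero (1 : GaloisField 2 n)] at hsum0
      simp only [mul_zero, add_zero, zero_add] at hsum0
      have h5 : (1 + c) * (x + y) = 1 := (h2eq _ _).mp hsum0
      have h6 : x + y = (1 + c)⁻¹ := eq_inv_of_mul_eq_one_right h5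
      refine ⟨Or.inl h6, ?_⟩
      rw [← bf_symm hcard hn, ← h6, hl]

end MainProof

lemma bf_eq_zero_of_fix {n i : ℕ} (hcard : ∀ x : GaloisField 2 n, x ^ 2 ^ n = x)
    (hn : 1 < n) {d : ℕ} (hdn : d ∣ n) (hdi : d ∣ 2 * i) {γ : GaloisField 2 n}
    (hγ : γ ^ 2 ^ d = γ) : bf n i γ = 0 := by
  have hsub : d ∣ (n - 2) * i := by
    have h1 : (n - 2) * i = n * i - 2 * i := by rw [Nat.sub_mul]
    rw [h1]
    exact Nat.dvd_sub (Dvd.dvd.mul_right hdn i) hdi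
  obtain ⟨m2, hm2⟩ := hsub
  have hfix : γ ^ 2 ^ ((n - 2) * i) = γ := by
    rw [hm2, mul_comm]; exact pow_pow_mul hγ m2
  have hsplit : (n - 1) * i = (n - 2) * i + i := by
    have h2 : n - 1 = (n - 2) + 1 := by omega
    rw [h2]; ring
  have h3 : γ ^ 2 ^ ((n - 1) * i) = γ ^ 2 ^ i := by
    rw [hsplit, pow_add, pow_mul, hfix]
  unfold bf
  rw [h3, CharTwo.add_self_eq_zero]

lemma fix_of_bf_eq_zero {n i : ℕ} (hcard : ∀ x : GaloisField 2 n, x ^ 2 ^ n = x)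
    (hn : 1 < n) (hi : 0 < i) {γ : GaloisField 2 n} (h0 : bf n i γ = 0) :
    γ ^ 2 ^ (Nat.gcd n (2 * i)) = γ := by
  have heq : γ ^ 2 ^ i = γ ^ 2 ^ ((n - 1) * i) := by
    unfold bf at h0
    rwa [CharTwo.add_eq_iff_eq_add, zero_add] at h0
  have h2i : γ ^ 2 ^ (2 * i) = γ := by
    have e1 : (γ ^ 2 ^ i) ^ 2 ^ i = γ ^ 2 ^ (2 * i) := by
      rw [← pow_mul, ← pow_add, two_mul]
    have e2 : (γ ^ 2 ^ ((n - 1) * i)) ^ 2 ^ i = γ := by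
      rw [← pow_mul, ← pow_add, add_comm ((n - 1) * i) i, exp_split (i := i) hn]
      exact pow_ni hcard γ
    rw [← e1, heq, e2]
  exact pow_pow_gcd (by omega) (by omega) (hcard γ) h2i

/-- for `n > 1`, `α` with `tr(α+1) = 0` and `d = gcd(n, 2i)`:
`h_α` is PcN for every `c ∈ F_{2^d} \ F_2`, and APcN for every
`c ∈ F_{2^n} \ F_{2^d}`. -/
theorem stmt18 (n i d : ℕ) (hn : 1 < n) (hi : 0 < i) (hd : d = Nat.gcd n (2 * i))
    (α : GaloisField 2 n) (hα : aTr n (α + 1) = 0) :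
    (∀ c : GaloisField 2 n, c ^ 2 ^ d = c → c ≠ 0 → c ≠ 1 →
      cDelta c (hAlpha n i α) = 1) ∧
    (∀ c : GaloisField 2 n, ¬(c ^ 2 ^ d = c) →
      cDelta c (hAlpha n i α) = 2) := by
  classical
  have hn0 : n ≠ 0 := by omega
  haveI : Fintype (GaloisField 2 n) := Fintype.ofFinite _
  have hcardK : Fintype.card (GaloisField 2 n) = 2 ^ n := by
    rw [← Nat.card_eq_fintype_card]
    exact GaloisField.card 2 n hn0
  have hcard : ∀ x : GaloisField 2 n, x ^ 2 ^ n = x := fun x => by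
    have h := FiniteField.pow_card x
    rwa [hcardK] at h
  have htwo : (2 : GaloisField 2 n) = 0 := CharTwo.two_eq_zero
  have h2eq : ∀ u v : GaloisField 2 n, u + v = 0 ↔ u = v := fun u v =>
    ⟨fun h => by rwa [CharTwo.add_eq_iff_eq_add, zero_add] at h,
     fun h => by rw [h, CharTwo.add_self_eq_zero]⟩
  constructor
  · -- PcN case
    intro c hcfix hc0 hc1
    have he : (1 : GaloisField 2 n) + c ≠ 0 := fun h => hc1 ((h2eq 1 c).mp h).symm
    have hγd : ((1 + c)⁻¹ : GaloisField 2 n) ^ 2 ^ d = (1 + c)⁻¹ := by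
      rw [inv_pow, add_pow_char_pow, one_pow, hcfix]
    have hbγ : bf n i ((1 + c)⁻¹ : GaloisField 2 n) = 0 :=
      bf_eq_zero_of_fix hcard hn (hd ▸ Nat.gcd_dvd_left n (2 * i))
        (hd ▸ Nat.gcd_dvd_right n (2 * i)) hγd
    have hinj : ∀ a : GaloisField 2 n,
        Function.Injective (fun x => hAlpha n i α (x + a) + c * hAlpha n i α x) := by
      intro a x y hxy
      rcases classify hcard hn α hα c hc1 a x y hxy with h | ⟨-, hl⟩
      · exact h
      · rw [hbγ, mul_zero, aTr_zero] at hl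
        exact absurd hl.symm one_ne_zero
    unfold cDelta
    have hSet : { k : ℕ | ∃ a b : GaloisField 2 n, (c = 1 → a ≠ 0) ∧
        k = Nat.card {x : GaloisField 2 n //
          hAlpha n i α (x + a) + c * hAlpha n i α x = b} } = {1} := by
      ext k
      simp only [Set.mem_setOf_eq, Set.mem_singleton_iff]
      constructor
      · rintro ⟨a, b, -, rfl⟩
        exact card_fiber_eq_one (hinj a) b
      · rintro rfl
        exact ⟨0, 0, fun h => absurd h hc1, (card_fiber_eq_one (hinj 0) 0).symm⟩
    rw [hSet]
    exact csSup_singleton 1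
  · -- APcN case
    intro c hc
    have hc0 : c ≠ 0 := fun h => hc (by rw [h]; exact zero_pow (by positivity))
    have hc1 : c ≠ 1 := fun h => hc (by rw [h, one_pow])
    have he : (1 : GaloisField 2 n) + c ≠ 0 := fun h => hc1 ((h2eq 1 c).mp h).symm
    have hγ0 : ((1 + c)⁻¹ : GaloisField 2 n) ≠ 0 := inv_ne_zero he
    have hγn1 : ((1 + c)⁻¹ : GaloisField 2 n) ≠ 1 := by
      intro h
      have h2 : (1 : GaloisField 2 n) + c = 1 := inv_eq_one.mp h
      exact hc0 (by linear_combination h2)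
    have hbγ : bf n i ((1 + c)⁻¹ : GaloisField 2 n) ≠ 0 := by
      intro h0
      have hfix := fix_of_bf_eq_zero hcard hn hi h0
      rw [← hd] at hfix
      apply hc
      have h1 : ((1 + c) : GaloisField 2 n) ^ 2 ^ d = 1 + c := by
        have h2 : (((1 + c)⁻¹ : GaloisField 2 n))⁻¹ = 1 + c := inv_inv _
        calc ((1 + c) : GaloisField 2 n) ^ 2 ^ d
            = (((1 + c)⁻¹)⁻¹) ^ 2 ^ d := by rw [h2]
          _ = (((1 + c)⁻¹) ^ 2 ^ d)⁻¹ := by rw [inv_pow]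
          _ = ((1 + c)⁻¹)⁻¹ := by rw [hfix]
          _ = 1 + c := h2
      have h3 : 1 + c ^ 2 ^ d = 1 + c := by
        have h4 : ((1 + c) : GaloisField 2 n) ^ 2 ^ d = 1 + c ^ 2 ^ d := by
          rw [add_pow_char_pow, one_pow]
        rw [← h4, h1]
      exact add_left_cancel h3
    -- upper bound
    have hub : ∀ a b : GaloisField 2 n,
        Nat.card {x : GaloisField 2 n //
          hAlpha n i α (x + a) + c * hAlpha n i α x = b} ≤ 2 := by
      intro a b
      apply card_fiber_le_two
      intro x y z hx hy hz
      by_contra hcon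
      push_neg at hcon
      obtain ⟨hxy, hxz, hyz⟩ := hcon
      have h1 := (classify hcard hn α hα c hc1 a x y (hx.trans hy.symm)).resolve_left hxy
      have h2 := (classify hcard hn α hα c hc1 a x z (hx.trans hz.symm)).resolve_left hxz
      have h3 := (classify hcard hn α hα c hc1 a y z (hy.trans hz.symm)).resolve_left hyz
      have hyz1 : y + z ≠ 1 := by
        intro h
        rcases h3.1 with h3' | h3'
        · rw [h] at h3'
          exact hγn1 h3'.symm
        · rw [h] at h3'
          exact hγ0 (by linear_combination -h3')
      have hadd : (x + y) + (x + z) = y + z := by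
        linear_combination x * htwo
      rcases h1.1 with h1' | h1' <;> rcases h2.1 with h2' | h2'
      · exact hyz (add_left_cancel (h1'.trans h2'.symm))
      · apply hyz1
        rw [← hadd, h1', h2']
        linear_combination ((1 + c)⁻¹ : GaloisField 2 n) * htwo
      · apply hyz1
        rw [← hadd, h1', h2']
        linear_combination ((1 + c)⁻¹ : GaloisField 2 n) * htwo
      · exact hyz (add_left_cancel (h1'.trans h2'.symm))
    -- lower bound : construct a collision
    obtain ⟨w, hw⟩ := exists_aTr_one (K := GaloisField 2 n) (by omega) hcardK
    set a : GaloisField 2 n := w * (bf n i ((1 + c)⁻¹))⁻¹ with hadef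
    have ha : a * bf n i ((1 + c)⁻¹) = w := by
      rw [hadef, mul_assoc, inv_mul_cancel₀ hbγ, mul_one]
    have hmulγ : ((1 + c) : GaloisField 2 n) * (1 + c)⁻¹ = 1 := mul_inv_cancel₀ he
    have hTγ : Tf n i α ((1 + c)⁻¹) = 0 ∨ Tf n i α ((1 + c)⁻¹) = 1 := aTr_val hcard _
    obtain ⟨y, hy0, hDeq⟩ : ∃ y : GaloisField 2 n, y ≠ 0 ∧
        hAlpha n i α (0 + a) + c * hAlpha n i α 0
          = hAlpha n i α (y + a) + c * hAlpha n i α y := by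
      rcases hTγ with hTγ | hTγ
      · refine ⟨(1 + c)⁻¹, hγ0, ?_⟩
        apply (h2eq _ _).mp
        rw [Dsum (i := i) hcard hn α c a 0 ((1 + c)⁻¹)]
        simp only [Tf_zero, hTγ, zero_add, add_zero, mul_zero]
        rw [hmulγ, bf_symm hcard hn, ha, hw]
        exact CharTwo.add_self_eq_zero 1
      · refine ⟨1 + (1 + c)⁻¹, ?_, ?_⟩
        · intro h
          apply hγn1
          linear_combination h - htwo
        · apply (h2eq _ _).mp
          rw [Dsum (i := i) hcard hn α c a 0 (1 + (1 + c)⁻¹)]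
          have hT1γ : Tf n i α (1 + (1 + c)⁻¹) = 1 := by
            rw [add_comm, Tf_add_one hcard hn α hα, hTγ]
          have htr : aTr n (bf n i a * (0 + (1 + (1 + c)⁻¹))) = 1 := by
            rw [zero_add, bf_symm hcard hn, bf_add, bf_one, zero_add, ha, hw]
          rw [htr]
          simp only [Tf_zero, hT1γ, zero_add, mul_one]
          linear_combination hmulγ + (c + 2) * htwo
    -- conclude
    have h2mem : (2 : ℕ) ∈ { k : ℕ | ∃ a b : GaloisField 2 n, (c = 1 → a ≠ 0) ∧
        k = Nat.card {x : GaloisField 2 n //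
          hAlpha n i α (x + a) + c * hAlpha n i α x = b} } := by
      refine ⟨a, hAlpha n i α (0 + a) + c * hAlpha n i α 0, fun h => absurd h hc1, ?_⟩
      have hge := card_fiber_ge_two (P := fun x : GaloisField 2 n =>
        hAlpha n i α (x + a) + c * hAlpha n i α x
          = hAlpha n i α (0 + a) + c * hAlpha n i α 0) rfl hDeq.symm (Ne.symm hy0)
      exact (le_antisymm (hub a _) hge).symm
    have hubS : ∀ k ∈ { k : ℕ | ∃ a b : GaloisField 2 n, (c = 1 → a ≠ 0) ∧
        k = Nat.card {x : GaloisField 2 n //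
          hAlpha n i α (x + a) + c * hAlpha n i α x = b} }, k ≤ 2 := by
      rintro k ⟨a', b', -, rfl⟩
      exact hub a' b'
    unfold cDelta
    exact le_antisymm (csSup_le ⟨2, h2mem⟩ hubS) (le_csSup ⟨2, hubS⟩ h2mem)
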